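/- The best approximation with bounded Tucker ranks exists: for any real tensor X of shape n_1 × … × n_d and any rank bounds (r_1,…,r_d), the infimum of ‖X − Z‖_F over the set M_r = { Z of shape n_1 × … × n_d : rank(Z_(k)) ≤ r_k for all k } is attained, i.e. there exists Z* ∈ M_r with ‖X − Z*‖_F = inf_{Z ∈ M_r} ‖X − Z‖_F. -/

import Mathlib

open scoped BigOperators
open Matrix

/-- A `d`-dimensional real tensor of shape `n 0 × ⋯ × n (d-1)`. -/
abbrev Tensor {d : ℕ} (n : Fin d → ℕ) : Type := (∀ i, Fin (n i)) → ℝ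

/-- The mode-`k` unfolding of a tensor: rows indexed by the `k`-th index,
columns indexed by the remaining multi-index. -/
def modeUnfold {d : ℕ} {n : Fin d → ℕ} (X : Tensor n) (k : Fin d) :
    Matrix (Fin (n k)) (∀ i : {j : Fin d // j ≠ k}, Fin (n i.1)) ℝ :=
  fun a b => X fun i =>
    if h : i = k then Fin.cast (congrArg n h).symm a else b ⟨i, h⟩

/-- Frobenius norm of a tensor. -/
noncomputable def frobNorm {d : ℕ} {n : Fin d → ℕ} (X : Tensor n) : ℝ :=
  Real.sqrt (∑ i, X i ^ 2)


lemma det_ne_zero_of_rank_eq_card {p : Type*} [Fintype p] [DecidableEq p]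
    (M : Matrix p p ℝ) (h : M.rank = Fintype.card p) : M.det ≠ 0 := by
  intro hdet
  obtain ⟨v, hv, hMv⟩ := (Matrix.exists_mulVec_eq_zero_iff).2 hdet
  have hker : v ∈ LinearMap.ker M.mulVecLin := hMv
  have h1 : LinearMap.ker M.mulVecLin ≠ ⊥ := by
    intro hbot
    exact hv (by simpa [hbot] using hker)
  have h2 := LinearMap.finrank_range_add_finrank_ker M.mulVecLin
  have h3 : 0 < Module.finrank ℝ (LinearMap.ker M.mulVecLin) := by
    rw [Module.finrank_pos_iff]
    exact Submodule.nontrivial_iff_ne_bot.2 h1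
  rw [Matrix.rank] at h
  rw [h, Module.finrank_pi] at h2
  omega

lemma isClosed_rank_le {m p : Type*} [Fintype m] [Fintype p]
    (r : ℕ) : IsClosed {A : Matrix m p ℝ | A.rank ≤ r} := by
  classical
  have key : {A : Matrix m p ℝ | A.rank ≤ r}ᶜ =
      ⋃ g : Fin (r + 1) → p,
        {A : Matrix m p ℝ | ((A.submatrix id g)ᵀ * (A.submatrix id g)).det ≠ 0} := by
    ext A
    simp only [Set.mem_compl_iff, Set.mem_setOf_eq, Set.mem_iUnion, not_le]
    constructor
    · intro hA
      -- choose r+1 linearly independent columns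
      obtain ⟨b, hb_sub, hb_span, hb_li⟩ := exists_linearIndependent ℝ (Set.range Aᵀ)
      have hbfin : b.Finite := hb_li.setFinite
      haveI : Fintype b := hbfin.fintype
      have hcard : Module.finrank ℝ (Submodule.span ℝ b) = Fintype.card b := by
        rw [finrank_span_set_eq_card hb_li, Set.toFinset_card]
      have hrank : A.rank = Fintype.card b := by
        rw [Matrix.rank_eq_finrank_span_cols, show A.col = Aᵀ from rfl, ← hb_span, hcard]
      have hle : r + 1 ≤ Fintype.card b := by omega
      let e := Fintype.equivFin b
      let u : Fin (r + 1) → b := fun j => e.symm (Fin.castLE hle j)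
      have hu_inj : Function.Injective u := by
        intro a c hac
        have := e.symm.injective hac
        exact Fin.castLE_injective hle this
      have hv_li : LinearIndependent ℝ (fun j => (u j : m → ℝ)) :=
        hb_li.comp u hu_inj
      have hmem : ∀ j, ((u j : m → ℝ)) ∈ Set.range Aᵀ := fun j => hb_sub (u j).2
      choose g hg using hmem
      refine ⟨g, ?_⟩
      have hBT : (A.submatrix id g)ᵀ = fun j => (u j : m → ℝ) := by
        funext j i
        have := congrFun (hg j) i
        simpa [Matrix.submatrix, Matrix.transpose] using this
      have hrankB : (A.submatrix id g).rank = r + 1 := by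
        rw [Matrix.rank_eq_finrank_span_cols, show (A.submatrix id g).col = (A.submatrix id g)ᵀ from rfl, hBT, finrank_span_eq_card hv_li,
          Fintype.card_fin]
      have hrankM : ((A.submatrix id g)ᵀ * (A.submatrix id g)).rank = r + 1 := by
        rw [Matrix.rank_transpose_mul_self, hrankB]
      exact det_ne_zero_of_rank_eq_card _ (by simpa using hrankM)
    · rintro ⟨g, hg⟩
      have hunit : IsUnit ((A.submatrix id g)ᵀ * (A.submatrix id g)) :=
        (Matrix.isUnit_iff_isUnit_det _).2 (isUnit_iff_ne_zero.2 hg)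
      have h1 : ((A.submatrix id g)ᵀ * (A.submatrix id g)).rank = r + 1 := by
        rw [Matrix.rank_of_isUnit _ hunit, Fintype.card_fin]
      have h2 : ((A.submatrix id g)ᵀ * (A.submatrix id g)).rank ≤
          (A.submatrix id g).rank := Matrix.rank_mul_le_right _ _
      have h3 : (A.submatrix id g).rank ≤ A.rank := by
        rw [Matrix.rank_eq_finrank_span_cols, Matrix.rank_eq_finrank_span_cols]
        apply Submodule.finrank_mono
        apply Submodule.span_mono
        rintro x ⟨j, rfl⟩
        exact ⟨g j, rfl⟩
      omega
  rw [← isOpen_compl_iff, key]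
  apply isOpen_iUnion
  intro g
  have hF : Continuous fun A : Matrix m p ℝ =>
      ((A.submatrix id g)ᵀ * (A.submatrix id g)).det :=
    (((continuous_id.matrix_submatrix id g).matrix_transpose).matrix_mul
      (continuous_id.matrix_submatrix id g)).matrix_det
  exact isOpen_compl_iff.mpr (isClosed_singleton.preimage hF)

lemma frobNorm_nonneg {d : ℕ} {n : Fin d → ℕ} (X : Tensor n) : 0 ≤ frobNorm X :=
  Real.sqrt_nonneg _

lemma abs_le_frobNorm {d : ℕ} {n : Fin d → ℕ} (X : Tensor n) (i : ∀ i, Fin (n i)) :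
    |X i| ≤ frobNorm X := by
  rw [frobNorm, ← Real.sqrt_sq_eq_abs]
  apply Real.sqrt_le_sqrt
  exact Finset.single_le_sum (fun j _ => sq_nonneg (X j)) (Finset.mem_univ i)

lemma continuous_frobNorm_sub {d : ℕ} {n : Fin d → ℕ} (X : Tensor n) :
    Continuous fun Z : Tensor n => frobNorm (X - Z) := by
  apply Real.continuous_sqrt.comp
  apply continuous_finset_sum
  intro i _
  exact ((continuous_const.sub (continuous_apply i)).pow 2)

lemma continuous_modeUnfold {d : ℕ} {n : Fin d → ℕ} (k : Fin d) :
    Continuous fun Z : Tensor n => modeUnfold Z k := by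
  apply continuous_pi; intro a
  apply continuous_pi; intro b
  exact continuous_apply _

theorem tucker_best_approx_exists {d : ℕ} {n : Fin d → ℕ} (X : Tensor n)
    (r : Fin d → ℕ) :
    ∃ Z : Tensor n, (∀ k, (modeUnfold Z k).rank ≤ r k) ∧
      frobNorm (X - Z) =
        sInf {t : ℝ | ∃ W : Tensor n,
          (∀ k, (modeUnfold W k).rank ≤ r k) ∧ t = frobNorm (X - W)} := by
  classical
  set S : Set (Tensor n) := {Z | ∀ k, (modeUnfold Z k).rank ≤ r k} with hS
  have hS_closed : IsClosed S := by
    have : S = ⋂ k, (fun Z : Tensor n => modeUnfold Z k) ⁻¹' {A | A.rank ≤ r k} := by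
      ext Z; simp [hS, Set.mem_iInter]
    rw [this]
    exact isClosed_iInter fun k =>
      (isClosed_rank_le (r k)).preimage (continuous_modeUnfold k)
  have h0S : (0 : Tensor n) ∈ S := by
    intro k
    have : modeUnfold (0 : Tensor n) k = 0 := rfl
    rw [this, Matrix.rank_zero]
    exact Nat.zero_le _
  set f : Tensor n → ℝ := fun Z => frobNorm (X - Z) with hf
  have hf_cont : Continuous f := continuous_frobNorm_sub X
  set c := f 0 with hc
  set K := S ∩ f ⁻¹' Set.Iic c with hK
  have hK_closed : IsClosed K :=
    hS_closed.inter (isClosed_Iic.preimage hf_cont)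
  have hK_sub : K ⊆ Metric.closedBall X c := by
    intro Z hZ
    rw [Metric.mem_closedBall]
    have hc0 : 0 ≤ c := frobNorm_nonneg _
    rw [dist_pi_le_iff hc0]
    intro i
    have h1 : |(X - Z) i| ≤ frobNorm (X - Z) := abs_le_frobNorm _ i
    have h2 : frobNorm (X - Z) ≤ c := hZ.2
    calc dist (Z i) (X i) = |(X - Z) i| := by
          rw [Real.dist_eq, Pi.sub_apply, abs_sub_comm]
      _ ≤ c := h1.trans h2
  have hK_compact : IsCompact K :=
    (isCompact_closedBall X c).of_isClosed_subset hK_closed hK_sub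
  have h0K : (0 : Tensor n) ∈ K := ⟨h0S, le_refl c⟩
  obtain ⟨Z, hZK, hZmin⟩ := hK_compact.exists_isMinOn ⟨0, h0K⟩ hf_cont.continuousOn
  refine ⟨Z, hZK.1, ?_⟩
  have hmin : ∀ W ∈ S, f Z ≤ f W := by
    intro W hW
    by_cases hWc : f W ≤ c
    · exact hZmin ⟨hW, hWc⟩
    · exact (hZmin h0K).trans (le_of_not_ge hWc)
  apply le_antisymm
  · refine le_csInf ⟨f Z, Z, hZK.1, rfl⟩ ?_
    rintro t ⟨W, hW, rfl⟩
    exact hmin W hW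
  · exact csInf_le ⟨0, by rintro t ⟨W, _, rfl⟩; exact frobNorm_nonneg _⟩
      ⟨Z, hZK.1, rfl⟩
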